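/- Suppose D has two orthonormal eigenvectors u^a, u^b with distinct eigenvalues λ_a ≠ λ_b such that u^a·q⁰ ≠ 0 and u^b·q⁰ ≠ 0. Then for every pair of real numbers (S*, C*) there exists an intervention σ ∈ ℝⁿ such that Ṡ = S*, Ċ = C*, and Ṗ = 2(S* − C*); in particular, every surplus outcome (Ċ, Ṗ, Ṡ) satisfying (1/2)Ṗ + Ċ = Ṡ can be implemented by an intervention. -/

import Mathlib

noncomputable section
open Matrix MeasureTheory Filter

/-- Vectors in `ℝⁿ` with the Euclidean norm/inner product. -/
abbrev Vec (n : ℕ) := EuclideanSpace ℝ (Fin n)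

variable {n : ℕ}

/-- Price effect `ṗ = −(I − D)⁻¹ σ`. -/
def pDot (D : Matrix (Fin n) (Fin n) ℝ) (σ : Vec n) : Vec n :=
  -(Matrix.toEuclideanLin (1 - D)⁻¹ σ)

/-- Quantity effect `q̇ = D ṗ`. -/
def qDot (D : Matrix (Fin n) (Fin n) ℝ) (σ : Vec n) : Vec n :=
  Matrix.toEuclideanLin D (pDot D σ)

/-- Expenditure derivative `Ṡ = σ·q⁰`. -/
def SDot (q σ : Vec n) : ℝ := inner ℝ σ q

/-- Consumer surplus derivative `Ċ = −q⁰·ṗ`. -/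
def CDot (D : Matrix (Fin n) (Fin n) ℝ) (q σ : Vec n) : ℝ := -(inner ℝ q (pDot D σ) : ℝ)

/-- Producer surplus derivative `Ṗ = 2 q⁰·q̇`. -/
def PDot (D : Matrix (Fin n) (Fin n) ℝ) (q σ : Vec n) : ℝ := 2 * (inner ℝ q (qDot D σ) : ℝ)

/-- Total surplus derivative `Ẇ = Ċ + Ṗ − Ṡ`. -/
def WDot (D : Matrix (Fin n) (Fin n) ℝ) (q σ : Vec n) : ℝ :=
  CDot D q σ + PDot D q σ - SDot q σ

/-- A normalized Slutsky matrix: symmetric, negative semidefinite, diagonal entries `−1`. -/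
def IsSlutsky (D : Matrix (Fin n) (Fin n) ℝ) : Prop :=
  D.IsSymm ∧ (-D).PosSemidef ∧ ∀ i, D i i = -1

/-- The span of the eigenvectors of a matrix whose eigenvalues are at least `M`
in absolute value. -/
def eigSpan (A : Matrix (Fin n) (Fin n) ℝ) (M : ℝ) : Submodule ℝ (Vec n) :=
  ⨆ μ ∈ {μ : ℝ | M ≤ |μ|}, Module.End.eigenspace (Matrix.toEuclideanLin A) μ

/-- Orthogonal projection onto a subspace, as a map into the ambient space. -/
def projVec (V : Submodule ℝ (Vec n)) (x : Vec n) : Vec n :=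
  (V.orthogonalProjectionOnto x : Vec n)

/-- Orthogonal projection onto a subspace, as a continuous linear endomorphism. -/
def projCLM (V : Submodule ℝ (Vec n)) : Vec n →L[ℝ] Vec n :=
  V.subtypeL.comp V.orthogonalProjectionOnto

/-- Spectral (operator) norm of a matrix. -/
def specNorm (A : Matrix (Fin n) (Fin n) ℝ) : ℝ :=
  ‖LinearMap.toContinuousLinearMap (Matrix.toEuclideanLin A)‖


lemma eig_nonpos' {n : ℕ} (D : Matrix (Fin n) (Fin n) ℝ) (hD : (-D).PosSemidef)
    (u : Vec n) (lam : ℝ) (hu : ‖u‖ = 1) (heig : Matrix.toEuclideanLin D u = lam • u) :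
    lam ≤ 0 := by
  have h := hD.dotProduct_mulVec_nonneg ((WithLp.equiv 2 (Fin n → ℝ)) u)
  rw [Matrix.neg_mulVec] at h
  have hmv : D *ᵥ ((WithLp.equiv 2 (Fin n → ℝ)) u) = (WithLp.equiv 2 _) ((lam • u : Vec n)) := by
    show D *ᵥ u.ofLp = (lam • u).ofLp
    rw [← Matrix.ofLp_toEuclideanLin_apply, heig]
  rw [hmv] at h
  have h1 : (inner ℝ u u : ℝ) = 1 := by
    rw [real_inner_self_eq_norm_sq, hu]; norm_num
  rw [PiLp.inner_apply] at h1
  simp only [RCLike.inner_apply, conj_trivial] at h1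
  simp only [dotProduct_neg, star_trivial, WithLp.ofLp_smul,
    dotProduct_smul, smul_eq_mul] at h
  have : ((WithLp.equiv 2 (Fin n → ℝ)) u) ⬝ᵥ ((WithLp.equiv 2 (Fin n → ℝ)) u) = 1 := by
    simpa [dotProduct] using h1
  change 0 ≤ -((WithLp.equiv 2 (Fin n → ℝ)) u ⬝ᵥ (lam • (WithLp.equiv 2 (Fin n → ℝ)) u)) at h
  rw [dotProduct_smul, smul_eq_mul] at h
  rw [this] at h
  linarith

lemma toEuclideanLin_mul_apply' {n : ℕ} (A B : Matrix (Fin n) (Fin n) ℝ) (x : Vec n) :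
    Matrix.toEuclideanLin (A * B) x = Matrix.toEuclideanLin A (Matrix.toEuclideanLin B x) := by
  simp [Matrix.toEuclideanLin_apply, Matrix.mulVec_mulVec]

lemma toEuclideanLin_one_apply' {n : ℕ} (x : Vec n) :
    Matrix.toEuclideanLin (1 : Matrix (Fin n) (Fin n) ℝ) x = x := by
  simp [Matrix.toEuclideanLin_apply]

/-- if D has two orthonormal eigenvectors with distinct eigenvalues,
both non-orthogonal to q0, then every surplus outcome with (1/2)Pdot + Cdot = Sdot is
implementable by some intervention. -/
theorem stmt18 (n : ℕ) (hn : 1 ≤ n) (D : Matrix (Fin n) (Fin n) ℝ) (hD : IsSlutsky D)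
    (q : Vec n) (hq : ‖q‖ ≤ 1)
    (ua ub : Vec n) (lama lamb : ℝ)
    (hua : ‖ua‖ = 1) (hub : ‖ub‖ = 1) (hab : (inner ℝ ua ub : ℝ) = 0)
    (heiga : Matrix.toEuclideanLin D ua = lama • ua)
    (heigb : Matrix.toEuclideanLin D ub = lamb • ub)
    (hne : lama ≠ lamb)
    (hqa : (inner ℝ ua q : ℝ) ≠ 0) (hqb : (inner ℝ ub q : ℝ) ≠ 0) :
    ∀ Sstar Cstar : ℝ, ∃ σ : Vec n,
      SDot q σ = Sstar ∧ CDot D q σ = Cstar ∧ PDot D q σ = 2 * (Sstar - Cstar) := by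
  intro Sstar Cstar
  obtain ⟨hsym, hpsd, hdiag⟩ := hD
  have hla : lama ≤ 0 := eig_nonpos' D hpsd ua lama hua heiga
  have hlb : lamb ≤ 0 := eig_nonpos' D hpsd ub lamb hub heigb
  have hoa : (0:ℝ) < 1 - lama := by linarith
  have hob : (0:ℝ) < 1 - lamb := by linarith
  set a : ℝ := inner ℝ ua q with ha_def
  set b : ℝ := inner ℝ ub q with hb_def
  set α : ℝ := (1 - lama)⁻¹ with hα_def
  set β : ℝ := (1 - lamb)⁻¹ with hβ_def
  have hα1 : α * (1 - lama) = 1 := by rw [hα_def]; exact inv_mul_cancel₀ (ne_of_gt hoa)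
  have hβ1 : β * (1 - lamb) = 1 := by rw [hβ_def]; exact inv_mul_cancel₀ (ne_of_gt hob)
  have hαβ : α ≠ β := by
    intro h
    exact hne (by have := inv_injective (hα_def ▸ hβ_def ▸ h); linarith)
  have hαβ' : α - β ≠ 0 := sub_ne_zero.mpr hαβ
  set x : ℝ := (Cstar - β * Sstar) / (α - β) with hx_def
  set y : ℝ := (α * Sstar - Cstar) / (α - β) with hy_def
  set s : ℝ := x / a with hs_def
  set t : ℝ := y / b with ht_def
  set σ : Vec n := s • ua + t • ub with hσ_def
  -- invertibility of 1 - D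
  have hposdef : (1 - D).PosDef := by
    have := (Matrix.PosDef.add_posSemidef (Matrix.PosDef.one) hpsd)
    simpa [sub_eq_add_neg] using this
  have hdetu : IsUnit (1 - D).det := isUnit_iff_ne_zero.mpr (ne_of_gt hposdef.det_pos)
  have hinvmul : (1 - D)⁻¹ * (1 - D) = 1 := Matrix.nonsing_inv_mul _ hdetu
  -- action of 1 - D on eigenvectors
  have hLa : Matrix.toEuclideanLin (1 - D) ua = (1 - lama) • ua := by
    have h : Matrix.toEuclideanLin ((1:Matrix (Fin n) (Fin n) ℝ) - D) ua
        = Matrix.toEuclideanLin (1:Matrix (Fin n) (Fin n) ℝ) ua - Matrix.toEuclideanLin D ua := by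
      rw [map_sub]; rfl
    rw [h, toEuclideanLin_one_apply', heiga, sub_smul, one_smul]
  have hLb : Matrix.toEuclideanLin (1 - D) ub = (1 - lamb) • ub := by
    have h : Matrix.toEuclideanLin ((1:Matrix (Fin n) (Fin n) ℝ) - D) ub
        = Matrix.toEuclideanLin (1:Matrix (Fin n) (Fin n) ℝ) ub - Matrix.toEuclideanLin D ub := by
      rw [map_sub]; rfl
    rw [h, toEuclideanLin_one_apply', heigb, sub_smul, one_smul]
  -- compute the price effect
  set w : Vec n := (α * s) • ua + (β * t) • ub with hw_def
  have hLw : Matrix.toEuclideanLin (1 - D) w = σ := by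
    rw [hw_def, map_add, _root_.map_smul, _root_.map_smul, hLa, hLb, smul_smul, smul_smul,
      hσ_def]
    have e1 : α * s * (1 - lama) = s := by rw [mul_comm α s, mul_assoc, hα1, mul_one]
    have e2 : β * t * (1 - lamb) = t := by rw [mul_comm β t, mul_assoc, hβ1, mul_one]
    rw [e1, e2]
  have hpdot : pDot D σ = -w := by
    rw [pDot, ← hLw, ← toEuclideanLin_mul_apply', hinvmul, toEuclideanLin_one_apply']
  -- compute the quantity effect
  have hqdot : qDot D σ = -((α * s * lama) • ua + (β * t * lamb) • ub) := by
    rw [qDot, hpdot, map_neg, hw_def, map_add, _root_.map_smul, _root_.map_smul,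
      heiga, heigb, smul_smul, smul_smul]
  -- inner products
  have hqua : (inner ℝ q ua : ℝ) = a := by rw [ha_def, real_inner_comm]
  have hqub : (inner ℝ q ub : ℝ) = b := by rw [hb_def, real_inner_comm]
  have hxa : s * a = x := by rw [hs_def]; exact div_mul_cancel₀ x hqa
  have hyb : t * b = y := by rw [ht_def]; exact div_mul_cancel₀ y hqb
  have hSD : SDot q σ = x + y := by
    rw [SDot, hσ_def, inner_add_left, real_inner_smul_left, real_inner_smul_left,
      ← ha_def, ← hb_def, hxa, hyb]
  have hqw : (inner ℝ q w : ℝ) = α * x + β * y := by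
    rw [hw_def, inner_add_right, real_inner_smul_right, real_inner_smul_right, hqua, hqub,
      mul_assoc, mul_assoc, hxa, hyb]
  have hCD : CDot D q σ = α * x + β * y := by
    rw [CDot, hpdot, inner_neg_right, neg_neg, hqw]
  have hPD : PDot D q σ = -2 * (α * lama * x + β * lamb * y) := by
    rw [PDot, hqdot, inner_neg_right, inner_add_right, real_inner_smul_right,
      real_inner_smul_right, hqua, hqub, ← hxa, ← hyb]
    ring
  -- algebraic identities for the chosen x, y
  have hS : x + y = Sstar := by
    rw [hx_def, hy_def]
    field_simp
    ring
  have hC : α * x + β * y = Cstar := by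
    rw [hx_def, hy_def]
    field_simp
    ring
  have hαl : α * lama = α - 1 := by linear_combination (-1 : ℝ) * hα1
  have hβl : β * lamb = β - 1 := by linear_combination (-1 : ℝ) * hβ1
  refine ⟨σ, ?_, ?_, ?_⟩
  · rw [hSD, hS]
  · rw [hCD, hC]
  · rw [hPD, hαl, hβl, ← hS, ← hC]; ring
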